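/- Let X and Y be complex Banach spaces and T : X → Y a compact linear operator. Let (f_n) be a bounded sequence in L²(𝕋, X). Let H be the set of all functionals y* ∈ Y* which satisfy lim_{n→∞} ∫₀^{2π} |⟨T(f_n(e^{it})), y*⟩|² dt/2π = 0. If H separates the points of Y, then lim_{n→∞} ∫₀^{2π} ‖T(f_n(e^{it}))‖_Y² dt/2π = 0. -/

import Mathlib

open MeasureTheory Filter Topology

theorem aux_int {α : Type*} [MeasurableSpace α] {μ : Measure α} {E : Type*} [NormedAddCommGroup E]
    {F : α → E} (h : MemLp F 2 μ) : Integrable (fun t => ‖F t‖ ^ 2) μ := by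
  have h2 := h.integrable_norm_rpow two_ne_zero ENNReal.ofNat_ne_top
  have h3 : (ENNReal.toReal 2) = ((2:ℕ):ℝ) := by norm_num
  rw [h3] at h2
  simpa only [Real.rpow_natCast] using h2

universe u

theorem aux_key {Y : Type u} [NormedAddCommGroup Y] [NormedSpace ℂ Y]
    (S : Set (Y →L[ℂ] ℂ)) (hsep : ∀ y : Y, y ≠ 0 → ∃ g ∈ S, g y ≠ 0)
    (K : Set Y) (hK : IsCompact K) {ε : ℝ} (hε : 0 < ε) :
    ∃ (ι : Type u) (t : Finset ι) (g : ι → Y →L[ℂ] ℂ) (c : ι → ℝ),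
      (∀ i ∈ t, g i ∈ S ∧ 0 ≤ c i) ∧
      ∀ y ∈ K, ‖y‖ ^ 2 ≤ ε ^ 2 + ∑ i ∈ t, c i * ‖g i y‖ ^ 2 := by
  obtain ⟨C, hC0, hC⟩ : ∃ C, 0 ≤ C ∧ ∀ y ∈ K, ‖y‖ ≤ C := by
    obtain ⟨C, hC⟩ := hK.isBounded.exists_norm_le
    exact ⟨max C 0, le_max_right _ _, fun y hy => (hC y hy).trans (le_max_left _ _)⟩
  set A : Set Y := K ∩ {y | ε ≤ ‖y‖} with hA
  have hAcomp : IsCompact A := hK.inter_right (isClosed_le continuous_const continuous_norm)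
  have hAne : ∀ a : Y, a ∈ A → a ≠ 0 := by
    rintro a ⟨_, ha⟩ rfl
    simp only [Set.mem_setOf_eq, norm_zero] at ha; linarith
  choose g hgS hgne using fun (a : A) => hsep a (hAne a a.2)
  have hcover : A ⊆ ⋃ a : A, {z | ‖g a a‖ / 2 < ‖g a z‖} := by
    intro y hy
    refine Set.mem_iUnion.2 ⟨⟨y, hy⟩, ?_⟩
    have h0 : 0 < ‖g ⟨y, hy⟩ y‖ := norm_pos_iff.2 (hgne ⟨y, hy⟩)
    show ‖g ⟨y, hy⟩ (⟨y, hy⟩ : A)‖ / 2 < ‖g ⟨y, hy⟩ y‖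
    exact half_lt_self h0
  obtain ⟨t, ht⟩ := hAcomp.elim_finite_subcover (fun a : A => {z | ‖g a a‖ / 2 < ‖g a z‖})
    (fun a => isOpen_lt continuous_const ((g a).continuous.norm)) hcover
  refine ⟨A, t, g, fun a => (C / (‖g a a‖ / 2)) ^ 2, fun a _ => ⟨hgS a, by positivity⟩, ?_⟩
  intro y hy
  by_cases hyA : y ∈ A
  · obtain ⟨a, hat, ha⟩ := Set.mem_iUnion₂.1 (ht hyA)
    have hga : 0 < ‖g a (a : Y)‖ := norm_pos_iff.2 (hgne a)
    have hδ : 0 < ‖g a (a : Y)‖ / 2 := by linarith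
    have h3 : ‖g a (a:Y)‖ / 2 ≤ ‖g a y‖ := le_of_lt ha
    have h4 : ‖y‖ ≤ (C / (‖g a (a:Y)‖ / 2)) * ‖g a y‖ := by
      rw [div_mul_eq_mul_div, le_div_iff₀ hδ]
      have h2 : ‖y‖ ≤ C := hC y hy
      nlinarith
    have h1 : ‖y‖ ^ 2 ≤ (C / (‖g a (a:Y)‖ / 2)) ^ 2 * ‖g a y‖ ^ 2 := by
      rw [← mul_pow]
      exact pow_le_pow_left₀ (norm_nonneg y) h4 2
    have h5 : (C / (‖g a (a:Y)‖/2)) ^ 2 * ‖g a y‖ ^ 2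
        ≤ ∑ i ∈ t, (C / (‖g i (i:Y)‖/2)) ^ 2 * ‖g i y‖ ^ 2 :=
      Finset.single_le_sum (f := fun i => (C / (‖g i (i:Y)‖/2)) ^ 2 * ‖g i y‖ ^ 2)
        (fun i _ => by positivity) hat
    nlinarith [sq_nonneg ε]
  · have hlt : ‖y‖ < ε := by
      by_contra h
      exact hyA ⟨hy, not_lt.1 h⟩
    have hsum : 0 ≤ ∑ i ∈ t, (C / (‖g i (i:Y)‖/2)) ^ 2 * ‖g i y‖ ^ 2 :=
      Finset.sum_nonneg fun i _ => by positivity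
    nlinarith [norm_nonneg y]

theorem stmt0 {X Y : Type*} [NormedAddCommGroup X] [NormedSpace ℂ X] [CompleteSpace X]
    [NormedAddCommGroup Y] [NormedSpace ℂ Y] [CompleteSpace Y]
    (T : X →L[ℂ] Y) (hT : IsCompactOperator T)
    (f : ℕ → ℝ → X)
    (hf : ∀ n, MemLp (f n) 2 (volume.restrict (Set.Ioc (0:ℝ) (2 * Real.pi))))
    (M : ℝ)
    (hbdd : ∀ n, ∫ t in Set.Ioc (0:ℝ) (2 * Real.pi), ‖f n t‖ ^ 2 ≤ M)
    (hsep : ∀ y : Y, y ≠ 0 →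
      ∃ g : Y →L[ℂ] ℂ,
        Tendsto (fun n => (2 * Real.pi)⁻¹ *
            ∫ t in Set.Ioc (0:ℝ) (2 * Real.pi), ‖g (T (f n t))‖ ^ 2) atTop (𝓝 0) ∧
        g y ≠ 0) :
    Tendsto (fun n => (2 * Real.pi)⁻¹ *
        ∫ t in Set.Ioc (0:ℝ) (2 * Real.pi), ‖T (f n t)‖ ^ 2) atTop (𝓝 0) := by
  have hπ : 0 < Real.pi := Real.pi_pos
  set μ : Measure ℝ := volume.restrict (Set.Ioc (0:ℝ) (2 * Real.pi)) with hμdef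
  haveI : IsFiniteMeasure μ := by
    constructor
    rw [hμdef, Measure.restrict_apply_univ, Real.volume_Ioc]
    exact ENNReal.ofReal_lt_top
  have hμuniv : (μ Set.univ).toReal = 2 * Real.pi := by
    rw [hμdef, Measure.restrict_apply_univ, Real.volume_Ioc, sub_zero,
      ENNReal.toReal_ofReal (by linarith)]
  have hM : 0 ≤ M :=
    le_trans (integral_nonneg (fun τ => by positivity)) (hbdd 0)
  have hTf : ∀ n, MemLp (fun τ => T (f n τ)) 2 μ := fun n => by
    simpa [Function.comp_def] using T.comp_memLp' (hf n)
  have hgTf : ∀ (g : Y →L[ℂ] ℂ) (n : ℕ), MemLp (fun τ => g (T (f n τ))) 2 μ := fun g n => by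
    simpa [Function.comp_def] using g.comp_memLp' (hTf n)
  have honef : ∀ n, Integrable (fun τ => (1 + ‖f n τ‖) ^ 2) μ := fun n => by
    have h1 : MemLp (fun τ => (1:ℝ) + ‖f n τ‖) 2 μ := (memLp_const (1:ℝ)).add (hf n).norm
    have h2 := aux_int h1
    have h3 : (fun τ => ‖(1:ℝ) + ‖f n τ‖‖ ^ 2) = fun τ => (1 + ‖f n τ‖) ^ 2 :=
      funext fun τ => by rw [Real.norm_of_nonneg (by positivity)]
    rwa [h3] at h2
  rw [NormedAddCommGroup.tendsto_nhds_zero]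
  intro ε' hε'
  set E : ℝ := (2 * Real.pi)⁻¹ * (4 * Real.pi + 2 * M) with hE
  have hE0 : 0 ≤ E := by positivity
  set D : ℝ := E + 1 with hD
  have hD0 : 0 < D := by positivity
  set ε : ℝ := Real.sqrt (ε' / (2 * D)) with hεdef
  have hεpos : 0 < ε := Real.sqrt_pos.2 (by positivity)
  have hε2 : ε ^ 2 = ε' / (2 * D) := Real.sq_sqrt (by positivity)
  set S : Set (Y →L[ℂ] ℂ) := {g | Tendsto (fun n => (2 * Real.pi)⁻¹ *
      ∫ τ, ‖g (T (f n τ))‖ ^ 2 ∂μ) atTop (𝓝 0)} with hSdef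
  have hsep' : ∀ y : Y, y ≠ 0 → ∃ g ∈ S, g y ≠ 0 := fun y hy => by
    obtain ⟨g, h1, h2⟩ := hsep y hy
    exact ⟨g, h1, h2⟩
  obtain ⟨ι, t, g, c, hgc, hbound⟩ :=
    aux_key S hsep' _ (hT.isCompact_closure_image_ball 1) hεpos
  -- pointwise bound
  have hpt : ∀ n τ, ‖T (f n τ)‖ ^ 2
      ≤ ε ^ 2 * (1 + ‖f n τ‖) ^ 2 + ∑ i ∈ t, c i * ‖g i (T (f n τ))‖ ^ 2 := by
    intro n τ
    have hr : (0:ℝ) < 1 + ‖f n τ‖ := by positivity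
    set z : Y := T ((((1 + ‖f n τ‖)⁻¹ : ℝ) : ℂ) • f n τ) with hz
    have hzK : z ∈ closure (T '' Metric.ball 0 1) := by
      apply subset_closure
      refine ⟨_, ?_, rfl⟩
      simp only [Metric.mem_ball, dist_zero_right, norm_smul, Complex.norm_real,
        Real.norm_eq_abs, abs_of_pos (inv_pos.2 hr)]
      rw [inv_mul_lt_iff₀ hr]
      linarith [norm_nonneg (f n τ)]
    have e : ((((1 + ‖f n τ‖) : ℝ)) : ℂ) • z = T (f n τ) := by
      rw [hz, ← _root_.map_smul, smul_smul, ← Complex.ofReal_mul,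
        mul_inv_cancel₀ hr.ne', Complex.ofReal_one, one_smul]
    have e2 : ‖T (f n τ)‖ ^ 2 = (1 + ‖f n τ‖) ^ 2 * ‖z‖ ^ 2 := by
      rw [← e, norm_smul, Complex.norm_real, Real.norm_eq_abs, abs_of_pos hr, mul_pow]
    have e3 : ∀ i, ‖g i (T (f n τ))‖ ^ 2 = (1 + ‖f n τ‖) ^ 2 * ‖g i z‖ ^ 2 := by
      intro i
      rw [← e, _root_.map_smul, norm_smul, Complex.norm_real, Real.norm_eq_abs,
        abs_of_pos hr, mul_pow]
    have hkey := hbound z hzK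
    calc ‖T (f n τ)‖ ^ 2 = (1 + ‖f n τ‖) ^ 2 * ‖z‖ ^ 2 := e2
      _ ≤ (1 + ‖f n τ‖) ^ 2 * (ε ^ 2 + ∑ i ∈ t, c i * ‖g i z‖ ^ 2) :=
          mul_le_mul_of_nonneg_left hkey (by positivity)
      _ = ε ^ 2 * (1 + ‖f n τ‖) ^ 2 + ∑ i ∈ t, c i * ((1 + ‖f n τ‖) ^ 2 * ‖g i z‖ ^ 2) := by
          rw [mul_add, Finset.mul_sum]
          congr 1
          · ring
          · exact Finset.sum_congr rfl fun i _ => by ring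
      _ = ε ^ 2 * (1 + ‖f n τ‖) ^ 2 + ∑ i ∈ t, c i * ‖g i (T (f n τ))‖ ^ 2 := by
          congr 1
          exact Finset.sum_congr rfl fun i _ => by rw [e3 i]
  -- integral bound per n
  have hIn : ∀ n, (2 * Real.pi)⁻¹ * ∫ τ, ‖T (f n τ)‖ ^ 2 ∂μ
      ≤ ε' / 2 + ∑ i ∈ t, c i * ((2 * Real.pi)⁻¹ * ∫ τ, ‖g i (T (f n τ))‖ ^ 2 ∂μ) := by
    intro n
    have I1 : Integrable (fun τ => ‖T (f n τ)‖ ^ 2) μ := aux_int (hTf n)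
    have I3 : ∀ i, Integrable (fun τ => c i * ‖g i (T (f n τ))‖ ^ 2) μ := fun i =>
      (aux_int (hgTf (g i) n)).const_mul (c i)
    have I2 : Integrable (fun τ => ε ^ 2 * (1 + ‖f n τ‖) ^ 2) μ := (honef n).const_mul _
    have IS : Integrable (fun τ => ∑ i ∈ t, c i * ‖g i (T (f n τ))‖ ^ 2) μ :=
      integrable_finset_sum t fun i _ => I3 i
    have h1 : ∫ τ, ‖T (f n τ)‖ ^ 2 ∂μ
        ≤ ∫ τ, (ε ^ 2 * (1 + ‖f n τ‖) ^ 2 + ∑ i ∈ t, c i * ‖g i (T (f n τ))‖ ^ 2) ∂μ :=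
      integral_mono I1 (I2.add IS) (fun τ => hpt n τ)
    rw [integral_add I2 IS, integral_const_mul, integral_finset_sum t (fun i _ => I3 i)] at h1
    simp_rw [integral_const_mul] at h1
    -- bound on ∫ (1+‖f‖)²
    have h2 : ∫ τ, (1 + ‖f n τ‖) ^ 2 ∂μ ≤ 4 * Real.pi + 2 * M := by
      have I0 : Integrable (fun τ => ‖f n τ‖ ^ 2) μ := aux_int (hf n)
      have hle : ∀ τ, (1 + ‖f n τ‖) ^ 2 ≤ 2 + 2 * ‖f n τ‖ ^ 2 := fun τ => by
        nlinarith [norm_nonneg (f n τ), sq_nonneg (1 - ‖f n τ‖)]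
      calc ∫ τ, (1 + ‖f n τ‖) ^ 2 ∂μ ≤ ∫ τ, (2 + 2 * ‖f n τ‖ ^ 2) ∂μ :=
            integral_mono (honef n) ((integrable_const 2).add (I0.const_mul 2)) hle
        _ = 2 * Real.pi * 2 + 2 * ∫ τ, ‖f n τ‖ ^ 2 ∂μ := by
            rw [integral_add (integrable_const 2) (I0.const_mul 2), integral_const_mul,
              integral_const, smul_eq_mul, measureReal_def, hμuniv]
        _ ≤ 4 * Real.pi + 2 * M := by
            have := hbdd n
            linarith
    have hq : 0 ≤ ε' / (2 * D) := by positivity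
    have hfirst : (2 * Real.pi)⁻¹ * (ε ^ 2 * ∫ τ, (1 + ‖f n τ‖) ^ 2 ∂μ) ≤ ε' / 2 := by
      have hε2' : 0 ≤ ε ^ 2 := sq_nonneg ε
      have hnn : 0 ≤ ∫ τ, (1 + ‖f n τ‖) ^ 2 ∂μ := integral_nonneg fun τ => by positivity
      have step1 : (2 * Real.pi)⁻¹ * (ε ^ 2 * ∫ τ, (1 + ‖f n τ‖) ^ 2 ∂μ)
          ≤ ε ^ 2 * E := by
        rw [hE]
        have := mul_le_mul_of_nonneg_left h2 hε2'
        calc (2 * Real.pi)⁻¹ * (ε ^ 2 * ∫ τ, (1 + ‖f n τ‖) ^ 2 ∂μ)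
            ≤ (2 * Real.pi)⁻¹ * (ε ^ 2 * (4 * Real.pi + 2 * M)) := by
              apply mul_le_mul_of_nonneg_left _ (by positivity)
              exact this
          _ = ε ^ 2 * ((2 * Real.pi)⁻¹ * (4 * Real.pi + 2 * M)) := by ring
      have step2 : ε ^ 2 * E ≤ ε' / 2 := by
        rw [hε2]
        have hED : E ≤ D := by rw [hD]; linarith
        have hkey : D * (ε' / (2 * D)) = ε' / 2 := by
          field_simp
        calc ε' / (2 * D) * E ≤ ε' / (2 * D) * D := mul_le_mul_of_nonneg_left hED hq
          _ = ε' / 2 := by rw [mul_comm]; exact hkey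
      linarith
    calc (2 * Real.pi)⁻¹ * ∫ τ, ‖T (f n τ)‖ ^ 2 ∂μ
        ≤ (2 * Real.pi)⁻¹ * (ε ^ 2 * ∫ τ, (1 + ‖f n τ‖) ^ 2 ∂μ
            + ∑ i ∈ t, c i * ∫ τ, ‖g i (T (f n τ))‖ ^ 2 ∂μ) :=
          mul_le_mul_of_nonneg_left h1 (by positivity)
      _ = (2 * Real.pi)⁻¹ * (ε ^ 2 * ∫ τ, (1 + ‖f n τ‖) ^ 2 ∂μ)
            + ∑ i ∈ t, c i * ((2 * Real.pi)⁻¹ * ∫ τ, ‖g i (T (f n τ))‖ ^ 2 ∂μ) := by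
          rw [mul_add, Finset.mul_sum]
          congr 1
          exact Finset.sum_congr rfl fun i _ => by ring
      _ ≤ ε' / 2 + ∑ i ∈ t, c i * ((2 * Real.pi)⁻¹ * ∫ τ, ‖g i (T (f n τ))‖ ^ 2 ∂μ) := by
          have : ∀ i ∈ t, 0 ≤ c i * ((2 * Real.pi)⁻¹ * ∫ τ, ‖g i (T (f n τ))‖ ^ 2 ∂μ) :=
            fun i hi => mul_nonneg (hgc i hi).2
              (mul_nonneg (by positivity) (integral_nonneg fun τ => by positivity))
          linarith [hfirst]
  -- the tail tends to 0
  have hsum0 : Tendsto (fun n => ∑ i ∈ t, c i *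
      ((2 * Real.pi)⁻¹ * ∫ τ, ‖g i (T (f n τ))‖ ^ 2 ∂μ)) atTop (𝓝 0) := by
    have h0 : Tendsto (fun n => ∑ i ∈ t, c i *
        ((2 * Real.pi)⁻¹ * ∫ τ, ‖g i (T (f n τ))‖ ^ 2 ∂μ)) atTop (𝓝 (∑ i ∈ t, c i * 0)) :=
      tendsto_finset_sum t fun i hi => ((hgc i hi).1).const_mul (c i)
    simpa using h0
  have hev : ∀ᶠ n in atTop, (∑ i ∈ t, c i *
      ((2 * Real.pi)⁻¹ * ∫ τ, ‖g i (T (f n τ))‖ ^ 2 ∂μ)) < ε' / 2 :=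
    hsum0.eventually_lt_const (by positivity)
  filter_upwards [hev] with n hn
  have han : 0 ≤ (2 * Real.pi)⁻¹ * ∫ τ, ‖T (f n τ)‖ ^ 2 ∂μ :=
    mul_nonneg (by positivity) (integral_nonneg fun τ => by positivity)
  rw [Real.norm_of_nonneg han]
  calc (2 * Real.pi)⁻¹ * ∫ τ, ‖T (f n τ)‖ ^ 2 ∂μ
      ≤ ε' / 2 + ∑ i ∈ t, c i * ((2 * Real.pi)⁻¹ * ∫ τ, ‖g i (T (f n τ))‖ ^ 2 ∂μ) := hIn n
    _ < ε' / 2 + ε' / 2 := by linarith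
    _ = ε' := by ring
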